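/- (Proposition 3: signed distance to an H-determined set can be computed with the H-restricted distance.) Let H ⊆ V and let A be an H-determined set of states. Then for every state σ, SDist(σ, A) = SDist_H(σ, A). Consequently, for every set B of states, inf{SDist(σ, A) | σ ∈ B} = inf{SDist_H(σ, A) | σ ∈ B}. -/

import Mathlib

open scoped BigOperators Classical

variable {V : Type*} [Fintype V]

/-- Euclidean distance between states restricted to the variables in `H`. -/
noncomputable def distH (H : Finset V) (σ σ' : V → ℝ) : ℝ :=
  Real.sqrt (∑ x ∈ H, (σ x - σ' x) ^ 2)

/-- Signed distance of a state to a set of states with respect to a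
distance function `δ`, valued in ℝ ∪ {−∞, +∞}. -/
noncomputable def SDistGen (δ : (V → ℝ) → (V → ℝ) → ℝ)
    (σ : V → ℝ) (A : Set (V → ℝ)) : EReal :=
  if σ ∈ A then sInf ((fun σ' => ((δ σ σ' : ℝ) : EReal)) '' Aᶜ)
  else - sInf ((fun σ' => ((δ σ σ' : ℝ) : EReal)) '' A)

theorem signed_distance_H_determined
    (H : Finset V) (A : Set (V → ℝ))
    (hdet : ∀ σ σ' : V → ℝ, (∀ x ∈ H, σ x = σ' x) → (σ ∈ A ↔ σ' ∈ A)) :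
    (∀ σ : V → ℝ,
      SDistGen (distH (Finset.univ : Finset V)) σ A = SDistGen (distH H) σ A) ∧
    (∀ B : Set (V → ℝ),
      sInf ((fun σ => SDistGen (distH (Finset.univ : Finset V)) σ A) '' B)
        = sInf ((fun σ => SDistGen (distH H) σ A) '' B)) := by
  -- key: for any H-determined set S, the infima of the two distances agree
  have key : ∀ (S : Set (V → ℝ)), (∀ σ σ' : V → ℝ, (∀ x ∈ H, σ x = σ' x) → (σ ∈ S ↔ σ' ∈ S)) →
      ∀ σ : V → ℝ,
      sInf ((fun σ' => ((distH (Finset.univ : Finset V) σ σ' : ℝ) : EReal)) '' S)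
        = sInf ((fun σ' => ((distH H σ σ' : ℝ) : EReal)) '' S) := by
    intro S hS σ
    apply le_antisymm
    · apply sInf_le_sInf_of_isCoinitialFor
      rintro x ⟨σ', hσ', rfl⟩
      set σ'' : V → ℝ := fun x => if x ∈ H then σ' x else σ x with hσ''def
      refine ⟨((distH (Finset.univ : Finset V) σ σ'' : ℝ) : EReal),
        ⟨σ'', (hS σ'' σ' (fun x hx => by simp [hσ''def, hx])).mpr hσ', rfl⟩, ?_⟩
      have : distH (Finset.univ : Finset V) σ σ'' = distH H σ σ' := by
        unfold distH
        congr 1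
        rw [← Finset.sum_subset (Finset.subset_univ H)]
        · apply Finset.sum_congr rfl
          intro x hx
          simp [hσ''def, hx]
        · intro x _ hx
          simp [hσ''def, hx]
      rw [this]
    · apply sInf_le_sInf_of_isCoinitialFor
      rintro x ⟨σ', hσ', rfl⟩
      refine ⟨((distH H σ σ' : ℝ) : EReal), ⟨σ', hσ', rfl⟩, ?_⟩
      have : distH H σ σ' ≤ distH (Finset.univ : Finset V) σ σ' := by
        apply Real.sqrt_le_sqrt
        apply Finset.sum_le_sum_of_subset_of_nonneg (Finset.subset_univ H)
        intro i _ _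
        positivity
      show ((distH H σ σ' : ℝ) : EReal) ≤ ((distH (Finset.univ : Finset V) σ σ' : ℝ) : EReal)
      exact_mod_cast this
  have hcompl : ∀ σ σ' : V → ℝ, (∀ x ∈ H, σ x = σ' x) → (σ ∈ Aᶜ ↔ σ' ∈ Aᶜ) := by
    intro σ σ' h
    simp [hdet σ σ' h]
  have main : ∀ σ : V → ℝ,
      SDistGen (distH (Finset.univ : Finset V)) σ A = SDistGen (distH H) σ A := by
    intro σ
    unfold SDistGen
    by_cases hσ : σ ∈ A
    · simp only [hσ, if_true]
      exact key Aᶜ hcompl σ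
    · simp only [hσ, if_false]
      rw [key A hdet σ]
  refine ⟨main, fun B => ?_⟩
  congr 1
  ext x
  simp only [Set.mem_image]
  constructor
  · rintro ⟨σ, hσ, rfl⟩; exact ⟨σ, hσ, (main σ).symm⟩
  · rintro ⟨σ, hσ, rfl⟩; exact ⟨σ, hσ, main σ⟩
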